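/- Let Γ be a strictly Deza graph with parameters (n, k, b, a) with k = b + 1 and β(v) > 1 for every vertex v, and let x be a vertex of type (A). If x is of type (A1) with distinguished vertex x* = y, then B(y) equals the set of all vertices lying in N(xᵢ) \ N(x) for some xᵢ ∈ B(x), and y is of type (A). If x is of type (A2) with distinguished vertex x* = z, then B(z) equals the set of all vertices lying in N(x) \ N(xᵢ) for some xᵢ ∈ B(x), and z is of type (A). -/

import Mathlib

open Finset SimpleGraph

universe u v

/-- The number of common neighbours of two vertices. -/
def commonNbrs {V : Type u} [Fintype V] [DecidableEq V] (G : SimpleGraph V)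
    [DecidableRel G.Adj] (x y : V) : ℕ :=
  (G.neighborFinset x ∩ G.neighborFinset y).card

/-- `G` is a Deza graph with parameters `(n, k, b, a)`: a nonempty `k`-regular graph on `n`
vertices in which any two distinct vertices have either `b` or `a` common neighbours,
where `b ≥ a`. -/
def IsDezaGraph {V : Type u} [Fintype V] [DecidableEq V] (G : SimpleGraph V)
    [DecidableRel G.Adj] (n k b a : ℕ) : Prop :=
  G ≠ ⊥ ∧ Fintype.card V = n ∧ G.IsRegularOfDegree k ∧ a ≤ b ∧
    ∀ x y : V, x ≠ y → commonNbrs G x y = b ∨ commonNbrs G x y = a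

/-- `G` is a strictly Deza graph with parameters `(n, k, b, a)`: a Deza graph of
diameter 2 that is not strongly regular. -/
def IsStrictlyDezaGraph {V : Type u} [Fintype V] [DecidableEq V] (G : SimpleGraph V)
    [DecidableRel G.Adj] (n k b a : ℕ) : Prop :=
  IsDezaGraph G n k b a ∧ G.Connected ∧ (∀ x y : V, G.dist x y ≤ 2) ∧
    (∃ x y : V, G.dist x y = 2) ∧ ¬ ∃ ℓ μ : ℕ, G.IsSRGWith n k ℓ μ

/-- `B(v)`: the set of vertices `u ≠ v` having exactly `b` common neighbours with `v`. -/
def dezaB {V : Type u} [Fintype V] [DecidableEq V] (G : SimpleGraph V)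
    [DecidableRel G.Adj] (b : ℕ) (v : V) : Finset V :=
  univ.filter fun u => u ≠ v ∧ commonNbrs G u v = b

/-- `A(v)`: the set of vertices `u ≠ v` having exactly `a` common neighbours with `v`. -/
def dezaA {V : Type u} [Fintype V] [DecidableEq V] (G : SimpleGraph V)
    [DecidableRel G.Adj] (a : ℕ) (v : V) : Finset V :=
  univ.filter fun u => u ≠ v ∧ commonNbrs G u v = a

/-- `B[v] = B(v) ∪ {v}`. -/
def dezaBc {V : Type u} [Fintype V] [DecidableEq V] (G : SimpleGraph V)
    [DecidableRel G.Adj] (b : ℕ) (v : V) : Finset V :=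
  insert v (dezaB G b v)

/-- A vertex `v` is of type (A) if `B(v) ∩ N(v) = ∅`. -/
def IsTypeA {V : Type u} [Fintype V] [DecidableEq V] (G : SimpleGraph V)
    [DecidableRel G.Adj] (b : ℕ) (v : V) : Prop :=
  dezaB G b v ∩ G.neighborFinset v = ∅

/-- A vertex `v` is of type (B) if `B(v) ⊆ N(v)`. -/
def IsTypeB {V : Type u} [Fintype V] [DecidableEq V] (G : SimpleGraph V)
    [DecidableRel G.Adj] (b : ℕ) (v : V) : Prop :=
  dezaB G b v ⊆ G.neighborFinset v

/-- A vertex `v` is of type (C) if `|B(v) ∩ N(v)| = 1`. -/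
def IsTypeC {V : Type u} [Fintype V] [DecidableEq V] (G : SimpleGraph V)
    [DecidableRel G.Adj] (b : ℕ) (v : V) : Prop :=
  (dezaB G b v ∩ G.neighborFinset v).card = 1

/-- A vertex `x` of type (A) is of type (A1) if there exists `y ∈ N(x)` with
`N(x) \ N(xᵢ) = {y}` for every `xᵢ ∈ B(x)`. -/
def IsTypeA1 {V : Type u} [Fintype V] [DecidableEq V] (G : SimpleGraph V)
    [DecidableRel G.Adj] (b : ℕ) (x : V) : Prop :=
  IsTypeA G b x ∧ ∃ y ∈ G.neighborFinset x,
    ∀ xi ∈ dezaB G b x, G.neighborFinset x \ G.neighborFinset xi = {y}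

/-- A vertex `x` of type (A) is of type (A2) if there exists `z ∉ N[x]` with
`N(xᵢ) \ N(x) = {z}` for every `xᵢ ∈ B(x)`. -/
def IsTypeA2 {V : Type u} [Fintype V] [DecidableEq V] (G : SimpleGraph V)
    [DecidableRel G.Adj] (b : ℕ) (x : V) : Prop :=
  IsTypeA G b x ∧ ∃ z ∉ insert x (G.neighborFinset x),
    ∀ xi ∈ dezaB G b x, G.neighborFinset xi \ G.neighborFinset x = {z}

/-- The complete multipartite graph with `m` parts of size `t`. -/
def completeMultipartiteGr (m t : ℕ) : SimpleGraph (Fin m × Fin t) where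
  Adj u v := u.1 ≠ v.1
  symm := ⟨fun _ _ h => Ne.symm h⟩
  loopless := ⟨fun _ h => h rfl⟩

/-- The 2-clique extension of a graph `H`: vertices `(u, i)` and `(v, j)` are adjacent
iff `u ~ v` in `H`, or `u = v` and `i ≠ j`. -/
def cliqueExt2 {W : Type v} (H : SimpleGraph W) : SimpleGraph (W × Fin 2) where
  Adj u v := H.Adj u.1 v.1 ∨ (u.1 = v.1 ∧ u.2 ≠ v.2)
  symm := by
    refine ⟨?_⟩
    intro u v h
    rcases h with h | ⟨h1, h2⟩
    · exact Or.inl h.symm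
    · exact Or.inr ⟨h1.symm, h2.symm⟩
  loopless := by
    refine ⟨?_⟩
    intro u h
    rcases h with h | ⟨_, h2⟩
    · exact H.irrefl h
    · exact h2 rfl

private lemma aux_card_inter_insert {α : Type*} [DecidableEq α] (u s : Finset α) {t : α}
    (ht : t ∉ s) :
    (u ∩ insert t s).card = (u ∩ s).card + (if t ∈ u then 1 else 0) := by
  by_cases h : t ∈ u
  · have he : u ∩ insert t s = insert t (u ∩ s) := by
      ext w
      simp only [Finset.mem_inter, Finset.mem_insert]
      constructor
      · rintro ⟨hw, (rfl | hw2)⟩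
        · exact Or.inl rfl
        · exact Or.inr ⟨hw, hw2⟩
      · rintro (rfl | ⟨hw, hw2⟩)
        · exact ⟨h, Or.inl rfl⟩
        · exact ⟨hw, Or.inr hw2⟩
    rw [he, Finset.card_insert_of_notMem (fun hc => ht (Finset.mem_inter.1 hc).2)]
    simp [h]
  · have he : u ∩ insert t s = u ∩ s := by
      ext w
      simp only [Finset.mem_inter, Finset.mem_insert]
      constructor
      · rintro ⟨hw, (rfl | hw2)⟩
        · exact absurd hw h
        · exact ⟨hw, hw2⟩
      · rintro ⟨hw, hw2⟩; exact ⟨hw, Or.inr hw2⟩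
    simp [he, h]

private lemma aux_card_sdiff_singleton {α : Type*} [DecidableEq α] (A : Finset α) (t : α) :
    (A \ {t}).card + (if t ∈ A then 1 else 0) = A.card := by
  rw [← Finset.erase_eq]
  by_cases h : t ∈ A
  · rw [Finset.card_erase_of_mem h, if_pos h]
    have : 1 ≤ A.card := Finset.card_pos.2 ⟨t, h⟩
    omega
  · rw [Finset.erase_eq_of_notMem h, if_neg h]
    omega

section Deza

variable {V : Type u} [Fintype V] [DecidableEq V] {G : SimpleGraph V} [DecidableRel G.Adj]

private lemma commonNbrs_def (G : SimpleGraph V) [DecidableRel G.Adj] (x y : V) :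
    commonNbrs G x y = (G.neighborFinset x ∩ G.neighborFinset y).card := rfl

private lemma commonNbrs_comm (G : SimpleGraph V) [DecidableRel G.Adj] (x y : V) :
    commonNbrs G x y = commonNbrs G y x := by
  rw [commonNbrs_def, commonNbrs_def, Finset.inter_comm]

private lemma mem_dezaB_iff {b : ℕ} {u v : V} :
    u ∈ dezaB G b v ↔ u ≠ v ∧ commonNbrs G u v = b := by
  simp [dezaB]

private lemma mem_nbr_comm {u v : V} : u ∈ G.neighborFinset v ↔ v ∈ G.neighborFinset u := by
  rw [SimpleGraph.mem_neighborFinset, SimpleGraph.mem_neighborFinset, G.adj_comm]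

private lemma sum_commonNbrs {b : ℕ} (hreg : ∀ v : V, (G.neighborFinset v).card = b + 1)
    (v : V) :
    ∑ u ∈ (univ : Finset V).erase v, commonNbrs G v u = (b + 1) * b := by
  have h1 : ∀ u : V, commonNbrs G v u
      = ∑ w ∈ G.neighborFinset v, (if w ∈ G.neighborFinset u then 1 else 0) := by
    intro u
    rw [commonNbrs_def, ← Finset.filter_mem_eq_inter, Finset.card_filter]
  calc ∑ u ∈ (univ : Finset V).erase v, commonNbrs G v u
      = ∑ u ∈ (univ : Finset V).erase v, ∑ w ∈ G.neighborFinset v,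
          (if w ∈ G.neighborFinset u then 1 else 0) := Finset.sum_congr rfl fun u _ => h1 u
    _ = ∑ w ∈ G.neighborFinset v, ∑ u ∈ (univ : Finset V).erase v,
          (if w ∈ G.neighborFinset u then 1 else 0) := Finset.sum_comm
    _ = ∑ _w ∈ G.neighborFinset v, b := by
        refine Finset.sum_congr rfl fun w hw => ?_
        rw [← Finset.card_filter]
        have he : ((univ : Finset V).erase v).filter (fun u => w ∈ G.neighborFinset u)
            = (G.neighborFinset w).erase v := by
          ext u
          simp only [Finset.mem_filter, Finset.mem_erase, Finset.mem_univ, true_and, and_true]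
          exact ⟨fun ⟨h1', h2'⟩ => ⟨h1', mem_nbr_comm.1 h2'⟩,
            fun ⟨h1', h2'⟩ => ⟨h1', mem_nbr_comm.1 h2'⟩⟩
        rw [he, Finset.card_erase_of_mem (mem_nbr_comm.1 hw), hreg w]
        omega
    _ = (b + 1) * b := by rw [Finset.sum_const, hreg v, smul_eq_mul]

private lemma cancel_le {a b n1 β1 β2 : ℕ} (hab : a < b) (h2 : β2 ≤ n1) (hle : β1 ≤ β2)
    (h : a * (n1 - β1) + b * β1 = a * (n1 - β2) + b * β2) : β1 = β2 := by
  obtain ⟨t, rfl⟩ := Nat.le.dest hle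
  have hn : n1 - β1 = (n1 - (β1 + t)) + t := by omega
  rw [hn, Nat.mul_add, Nat.mul_add] at h
  have ht : a * t = b * t := by linarith
  rcases Nat.eq_zero_or_pos t with h0 | h0
  · omega
  · have := Nat.eq_of_mul_eq_mul_right h0 ht
    omega

private lemma card_dezaB_eq {b a : ℕ}
    (hreg : ∀ v : V, (G.neighborFinset v).card = b + 1)
    (hdich : ∀ x y : V, x ≠ y → commonNbrs G x y = b ∨ commonNbrs G x y = a)
    (hab : a < b) (u v : V) : (dezaB G b u).card = (dezaB G b v).card := by
  have key : ∀ w : V, a * ((Fintype.card V - 1) - (dezaB G b w).card)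
      + b * (dezaB G b w).card = (b + 1) * b := by
    intro w
    have hsub : dezaB G b w ⊆ (univ : Finset V).erase w := by
      intro u' hu'
      rw [Finset.mem_erase]
      exact ⟨(mem_dezaB_iff.1 hu').1, Finset.mem_univ u'⟩
    have hsplit := Finset.sum_sdiff (f := fun u' => commonNbrs G w u') hsub
    have h2 : ∑ u' ∈ dezaB G b w, commonNbrs G w u' = b * (dezaB G b w).card := by
      have hc : ∀ u' ∈ dezaB G b w, commonNbrs G w u' = b := fun u' hu' => by
        rw [commonNbrs_comm]; exact (mem_dezaB_iff.1 hu').2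
      rw [Finset.sum_congr rfl hc, Finset.sum_const, smul_eq_mul, mul_comm]
    have h3 : ∑ u' ∈ (univ : Finset V).erase w \ dezaB G b w, commonNbrs G w u'
        = a * ((Fintype.card V - 1) - (dezaB G b w).card) := by
      have hc : ∀ u' ∈ (univ : Finset V).erase w \ dezaB G b w, commonNbrs G w u' = a := by
        intro u' hu'
        obtain ⟨hu1, hu2⟩ := Finset.mem_sdiff.1 hu'
        have hne : u' ≠ w := (Finset.mem_erase.1 hu1).1
        rcases hdich u' w hne with h | h
        · exact absurd (mem_dezaB_iff.2 ⟨hne, h⟩) hu2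
        · rw [commonNbrs_comm]; exact h
      rw [Finset.sum_congr rfl hc, Finset.sum_const, smul_eq_mul, mul_comm,
        Finset.card_sdiff_of_subset hsub, Finset.card_erase_of_mem (Finset.mem_univ w),
        Finset.card_univ, mul_comm]
    rw [← sum_commonNbrs hreg w, ← hsplit, h2, h3]
  have hle1 : (dezaB G b u).card ≤ Fintype.card V - 1 := by
    have hsub : dezaB G b u ⊆ (univ : Finset V).erase u := fun u' hu' =>
      Finset.mem_erase.2 ⟨(mem_dezaB_iff.1 hu').1, Finset.mem_univ u'⟩
    have := Finset.card_le_card hsub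
    rwa [Finset.card_erase_of_mem (Finset.mem_univ u), Finset.card_univ] at this
  have hle2 : (dezaB G b v).card ≤ Fintype.card V - 1 := by
    have hsub : dezaB G b v ⊆ (univ : Finset V).erase v := fun u' hu' =>
      Finset.mem_erase.2 ⟨(mem_dezaB_iff.1 hu').1, Finset.mem_univ u'⟩
    have := Finset.card_le_card hsub
    rwa [Finset.card_erase_of_mem (Finset.mem_univ v), Finset.card_univ] at this
  have heq : a * ((Fintype.card V - 1) - (dezaB G b u).card) + b * (dezaB G b u).card
      = a * ((Fintype.card V - 1) - (dezaB G b v).card) + b * (dezaB G b v).card := by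
    rw [key u, key v]
  rcases le_total (dezaB G b u).card (dezaB G b v).card with hle | hle
  · exact cancel_le hab hle2 hle heq
  · exact (cancel_le hab hle1 hle heq.symm).symm

private lemma deza_part1 {b a : ℕ}
    (hreg : ∀ v : V, (G.neighborFinset v).card = b + 1)
    (hdich : ∀ x y : V, x ≠ y → commonNbrs G x y = b ∨ commonNbrs G x y = a)
    (hab : a < b)
    (hβc : ∀ u v : V, (dezaB G b u).card = (dezaB G b v).card)
    (x y : V) (hxA : dezaB G b x ∩ G.neighborFinset x = ∅) (hy : y ∈ G.neighborFinset x)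
    (hyi : ∀ xi ∈ dezaB G b x, G.neighborFinset x \ G.neighborFinset xi = {y}) :
    dezaB G b y =
      (dezaB G b x).biUnion (fun xi => G.neighborFinset xi \ G.neighborFinset x) ∧
    dezaB G b y ∩ G.neighborFinset y = ∅ := by
  classical
  have hselfN : ∀ v : V, v ∉ G.neighborFinset v := by
    intro v h
    rw [SimpleGraph.mem_neighborFinset] at h
    exact G.irrefl h
  have hnotnbr : ∀ u ∈ dezaB G b x, u ∉ G.neighborFinset x := by
    intro u hu hmem
    have hmem2 : u ∈ dezaB G b x ∩ G.neighborFinset x := Finset.mem_inter.2 ⟨hu, hmem⟩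
    rw [hxA] at hmem2
    exact absurd hmem2 (Finset.notMem_empty u)
  have hxy : x ≠ y := fun h => hselfN y (h ▸ hy)
  have hyBx : y ∉ dezaB G b x := fun h => hnotnbr y h hy
  have hxBx : x ∉ dezaB G b x := fun h => (mem_dezaB_iff.1 h).1 rfl
  have hcyx : commonNbrs G y x = a := by
    rcases hdich y x (Ne.symm hxy) with h | h
    · exact absurd (mem_dezaB_iff.2 ⟨Ne.symm hxy, h⟩) hyBx
    · exact h
  have hcardNx : (G.neighborFinset x \ {y}).card = b := by
    rw [← Finset.erase_eq, Finset.card_erase_of_mem hy, hreg x]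
    omega
  -- facts about elements of B x
  have hinter : ∀ xi ∈ dezaB G b x, G.neighborFinset x ∩ G.neighborFinset xi
      = G.neighborFinset x \ {y} := by
    intro xi hxi
    rw [← hyi xi hxi, Finset.sdiff_sdiff_self_left]
  have hsub1 : ∀ xi ∈ dezaB G b x, G.neighborFinset x \ {y} ⊆ G.neighborFinset xi := by
    intro xi hxi
    rw [← hinter xi hxi]
    exact Finset.inter_subset_right
  have hsdcard : ∀ xi ∈ dezaB G b x, (G.neighborFinset xi \ G.neighborFinset x).card = 1 := by
    intro xi hxi
    have h1 := Finset.card_inter_add_card_sdiff (G.neighborFinset xi) (G.neighborFinset x)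
    have h2 : (G.neighborFinset xi ∩ G.neighborFinset x).card = b := (mem_dezaB_iff.1 hxi).2
    rw [h2, hreg xi] at h1
    omega
  have hNxieq : ∀ xi ∈ dezaB G b x, ∀ z ∈ G.neighborFinset xi \ G.neighborFinset x,
      G.neighborFinset xi = insert z (G.neighborFinset x \ {y}) := by
    intro xi hxi z hz
    obtain ⟨w, hw⟩ := Finset.card_eq_one.1 (hsdcard xi hxi)
    have hzw : z = w := by
      rw [hw] at hz
      exact Finset.mem_singleton.1 hz
    subst hzw
    rw [← Finset.sdiff_union_inter (G.neighborFinset xi) (G.neighborFinset x), hw,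
      Finset.inter_comm, hinter xi hxi, Finset.insert_eq]
  have hdisj : ∀ xi ∈ dezaB G b x, ∀ xj ∈ dezaB G b x, xi ≠ xj →
      ∀ w, w ∈ G.neighborFinset xi \ G.neighborFinset x →
        w ∈ G.neighborFinset xj \ G.neighborFinset x → False := by
    intro xi hxi xj hxj hne w hwi hwj
    have hEq : G.neighborFinset xi = G.neighborFinset xj := by
      rw [hNxieq xi hxi w hwi, hNxieq xj hxj w hwj]
    have hc : commonNbrs G xi xj = b + 1 := by
      rw [commonNbrs_def, hEq, Finset.inter_self, hreg xj]
    rcases hdich xi xj hne with h | h <;> omega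
  have hBxi : ∀ xi ∈ dezaB G b x, dezaB G b xi = insert x ((dezaB G b x).erase xi) := by
    intro xi hxi
    have hxixx : xi ≠ x := (mem_dezaB_iff.1 hxi).1
    have hsubset : insert x ((dezaB G b x).erase xi) ⊆ dezaB G b xi := by
      intro u hu
      rcases Finset.mem_insert.1 hu with rfl | hu
      · refine mem_dezaB_iff.2 ⟨hxixx.symm, ?_⟩
        rw [commonNbrs_comm]
        exact (mem_dezaB_iff.1 hxi).2
      · have hju := Finset.mem_of_mem_erase hu
        have hne : u ≠ xi := Finset.ne_of_mem_erase hu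
        have hsup : G.neighborFinset x \ {y} ⊆ G.neighborFinset u ∩ G.neighborFinset xi :=
          Finset.subset_inter (hsub1 u hju) (hsub1 xi hxi)
        have hge : b ≤ commonNbrs G u xi := by
          rw [commonNbrs_def]
          calc b = (G.neighborFinset x \ {y}).card := hcardNx.symm
            _ ≤ _ := Finset.card_le_card hsup
        rcases hdich u xi hne with h | h
        · exact mem_dezaB_iff.2 ⟨hne, h⟩
        · omega
    have hcard2 : (dezaB G b xi).card ≤ (insert x ((dezaB G b x).erase xi)).card := by
      rw [Finset.card_insert_of_notMem (fun hc => hxBx (Finset.mem_of_mem_erase hc)),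
        Finset.card_erase_of_mem hxi, hβc xi x]
      have h1 : 1 ≤ (dezaB G b x).card := Finset.card_pos.2 ⟨xi, hxi⟩
      omega
    exact (Finset.eq_of_subset_of_card_le hsubset hcard2).symm
  have hcNyNx : (G.neighborFinset y ∩ (G.neighborFinset x \ {y})).card = a := by
    have hyInter : y ∉ G.neighborFinset y ∩ G.neighborFinset x :=
      fun h => hselfN y (Finset.mem_inter.1 h).1
    have h1 : G.neighborFinset y ∩ (G.neighborFinset x \ {y})
        = G.neighborFinset y ∩ G.neighborFinset x := by
      rw [← Finset.inter_sdiff_assoc, ← Finset.erase_eq, Finset.erase_eq_of_notMem hyInter]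
    rw [h1, ← commonNbrs_def]
    exact hcyx
  have decompX : ∀ u : V, commonNbrs G u x = a →
      (G.neighborFinset u ∩ (G.neighborFinset x \ {y})).card
        + (if y ∈ G.neighborFinset u then 1 else 0) = a := by
    intro u hu
    have h2 : G.neighborFinset u ∩ (G.neighborFinset x \ {y})
        = (G.neighborFinset u ∩ G.neighborFinset x) \ {y} :=
      (Finset.inter_sdiff_assoc _ _ _).symm
    have h3 := aux_card_sdiff_singleton (G.neighborFinset u ∩ G.neighborFinset x) y
    have h4 : (y ∈ G.neighborFinset u ∩ G.neighborFinset x) ↔ y ∈ G.neighborFinset u := by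
      simp [Finset.mem_inter, hy]
    rw [commonNbrs_def] at hu
    rw [hu, if_congr h4 rfl rfl] at h3
    rw [h2, h3]
  -- main pointwise claim
  have main : ∀ xi ∈ dezaB G b x, ∀ z ∈ G.neighborFinset xi \ G.neighborFinset x,
      z ∈ dezaB G b y ∧ z ∉ G.neighborFinset y := by
    intro xi hxi z hz
    obtain ⟨hzNxi, hzNx⟩ := Finset.mem_sdiff.1 hz
    have hNxiz : G.neighborFinset xi = insert z (G.neighborFinset x \ {y}) :=
      hNxieq xi hxi z hz
    have hxiNx : xi ∉ G.neighborFinset x := hnotnbr xi hxi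
    have hxNxi : x ∉ G.neighborFinset xi := fun h => hxiNx (mem_nbr_comm.1 h)
    have hzx : z ≠ x := fun h => hxNxi (h ▸ hzNxi)
    have hzy : z ≠ y := fun h => hzNx (h ▸ hy)
    have hyNxi : y ∉ G.neighborFinset xi := by
      have hmem : y ∈ G.neighborFinset x \ G.neighborFinset xi := by
        rw [hyi xi hxi]
        exact Finset.mem_singleton_self y
      exact (Finset.mem_sdiff.1 hmem).2
    have hzNNxy : z ∉ G.neighborFinset x \ {y} := fun h => hzNx (Finset.mem_sdiff.1 h).1
    have decompXi : ∀ u : V, commonNbrs G u xi = a →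
        (G.neighborFinset u ∩ (G.neighborFinset x \ {y})).card
          + (if z ∈ G.neighborFinset u then 1 else 0) = a := by
      intro u hu
      rw [commonNbrs_def, hNxiz, aux_card_inter_insert _ _ hzNNxy] at hu
      exact hu
    have hyBxi : y ∉ dezaB G b xi := by
      rw [hBxi xi hxi]
      intro h
      rcases Finset.mem_insert.1 h with h | h
      · exact hxy h.symm
      · exact hyBx (Finset.mem_of_mem_erase h)
    have hyxi : y ≠ xi := fun h => hxiNx (h ▸ hy)
    have hcyxi : commonNbrs G y xi = a := by
      rcases hdich y xi hyxi with h | h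
      · exact absurd (mem_dezaB_iff.2 ⟨hyxi, h⟩) hyBxi
      · exact h
    have hzNy : z ∉ G.neighborFinset y := by
      intro hmem
      have h5 := decompXi y hcyxi
      rw [if_pos hmem, hcNyNx] at h5
      omega
    -- F4
    have hF4 : ∀ s ∈ G.neighborFinset x \ {y},
        (s ∈ G.neighborFinset y ↔ s ∈ G.neighborFinset z) := by
      intro s hs
      have hsNx := (Finset.mem_sdiff.1 hs).1
      have hsx : s ≠ x := fun h => hselfN x (h ▸ hsNx)
      have hsBx : s ∉ dezaB G b x := fun h => hnotnbr s h hsNx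
      have hcsx : commonNbrs G s x = a := by
        rcases hdich s x hsx with h | h
        · exact absurd (mem_dezaB_iff.2 ⟨hsx, h⟩) hsBx
        · exact h
      have hsNxi : s ∈ G.neighborFinset xi := hsub1 xi hxi hs
      have hsxi : s ≠ xi := fun h => hselfN xi (h ▸ hsNxi)
      have hsBxi : s ∉ dezaB G b xi := by
        rw [hBxi xi hxi]
        intro h
        rcases Finset.mem_insert.1 h with h | h
        · exact hsx h
        · exact hsBx (Finset.mem_of_mem_erase h)
      have hcsxi : commonNbrs G s xi = a := by
        rcases hdich s xi hsxi with h | h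
        · exact absurd (mem_dezaB_iff.2 ⟨hsxi, h⟩) hsBxi
        · exact h
      have e1 := decompX s hcsx
      have e2 := decompXi s hcsxi
      constructor
      · intro h
        have hy' : y ∈ G.neighborFinset s := mem_nbr_comm.1 h
        by_cases hz' : z ∈ G.neighborFinset s
        · exact mem_nbr_comm.1 hz'
        · rw [if_pos hy'] at e1
          rw [if_neg hz'] at e2
          omega
      · intro h
        have hz' : z ∈ G.neighborFinset s := mem_nbr_comm.1 h
        by_cases hy' : y ∈ G.neighborFinset s
        · exact mem_nbr_comm.1 hy'
        · rw [if_neg hy'] at e1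
          rw [if_pos hz'] at e2
          omega
    -- z ∉ B x
    have hzBx : z ∉ dezaB G b x := by
      intro hzBx
      have hsubz : G.neighborFinset x \ {y} ⊆ G.neighborFinset z := hsub1 z hzBx
      have hsub2 : G.neighborFinset x \ {y}
          ⊆ G.neighborFinset y ∩ (G.neighborFinset x \ {y}) := by
        intro s hs
        exact Finset.mem_inter.2 ⟨(hF4 s hs).2 (hsubz hs), hs⟩
      have hge := Finset.card_le_card hsub2
      rw [hcNyNx, hcardNx] at hge
      omega
    have hczx : commonNbrs G z x = a := by
      rcases hdich z x hzx with h | h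
      · exact absurd (mem_dezaB_iff.2 ⟨hzx, h⟩) hzBx
      · exact h
    have hxiNz : xi ∈ G.neighborFinset z := mem_nbr_comm.1 hzNxi
    have hinterz : (G.neighborFinset z ∩ insert xi (G.neighborFinset x)).card = a + 1 := by
      rw [aux_card_inter_insert _ _ hxiNx, if_pos hxiNz, ← commonNbrs_def, hczx]
    have hcardR : a + 1 + (G.neighborFinset z \ insert xi (G.neighborFinset x)).card
        = b + 1 := by
      have h6 := Finset.card_inter_add_card_sdiff (G.neighborFinset z)
        (insert xi (G.neighborFinset x))
      rw [hinterz, hreg z] at h6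
      omega
    have hRsub : ∀ r ∈ G.neighborFinset z \ insert xi (G.neighborFinset x),
        r ∈ G.neighborFinset y := by
      intro r hr
      obtain ⟨hrNz, hrNot⟩ := Finset.mem_sdiff.1 hr
      have hrxi : r ≠ xi := fun h => hrNot (by rw [h]; exact Finset.mem_insert_self xi _)
      have hrNx : r ∉ G.neighborFinset x := fun h => hrNot (Finset.mem_insert_of_mem h)
      have hzNr : z ∈ G.neighborFinset r := mem_nbr_comm.1 hrNz
      have hxNz : x ∉ G.neighborFinset z := fun h => hzNx (mem_nbr_comm.1 h)
      have hrx : r ≠ x := fun h => hxNz (h ▸ hrNz)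
      have hrBx : r ∉ dezaB G b x := by
        intro hrBx
        exact hdisj r hrBx xi hxi hrxi z (Finset.mem_sdiff.2 ⟨hzNr, hzNx⟩)
          (Finset.mem_sdiff.2 ⟨hzNxi, hzNx⟩)
      have hcrx : commonNbrs G r x = a := by
        rcases hdich r x hrx with h | h
        · exact absurd (mem_dezaB_iff.2 ⟨hrx, h⟩) hrBx
        · exact h
      have hrBxi : r ∉ dezaB G b xi := by
        rw [hBxi xi hxi]
        intro h
        rcases Finset.mem_insert.1 h with h | h
        · exact hrx h
        · exact hrBx (Finset.mem_of_mem_erase h)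
      have hcrxi : commonNbrs G r xi = a := by
        rcases hdich r xi hrxi with h | h
        · exact absurd (mem_dezaB_iff.2 ⟨hrxi, h⟩) hrBxi
        · exact h
      have e1 := decompX r hcrx
      have e2 := decompXi r hcrxi
      rw [if_pos hzNr] at e2
      by_cases hyr : y ∈ G.neighborFinset r
      · exact mem_nbr_comm.1 hyr
      · rw [if_neg hyr] at e1
        omega
    have hsubfin : (G.neighborFinset y ∩ (G.neighborFinset x \ {y}))
        ∪ (G.neighborFinset z \ insert xi (G.neighborFinset x)) ⊆
        G.neighborFinset y ∩ G.neighborFinset z := by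
      intro w hw
      rcases Finset.mem_union.1 hw with hw | hw
      · obtain ⟨hw1, hw2⟩ := Finset.mem_inter.1 hw
        exact Finset.mem_inter.2 ⟨hw1, (hF4 w hw2).1 hw1⟩
      · exact Finset.mem_inter.2 ⟨hRsub w hw, (Finset.mem_sdiff.1 hw).1⟩
    have hdisj2 : Disjoint (G.neighborFinset y ∩ (G.neighborFinset x \ {y}))
        (G.neighborFinset z \ insert xi (G.neighborFinset x)) := by
      rw [Finset.disjoint_left]
      intro w hw1 hw2
      exact (Finset.mem_sdiff.1 hw2).2
        (Finset.mem_insert_of_mem (Finset.mem_sdiff.1 (Finset.mem_inter.1 hw1).2).1)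
    have hge : b ≤ commonNbrs G y z := by
      rw [commonNbrs_def]
      calc b = a + (G.neighborFinset z \ insert xi (G.neighborFinset x)).card := by omega
        _ = ((G.neighborFinset y ∩ (G.neighborFinset x \ {y}))
            ∪ (G.neighborFinset z \ insert xi (G.neighborFinset x))).card := by
          rw [Finset.card_union_of_disjoint hdisj2, hcNyNx]
        _ ≤ _ := Finset.card_le_card hsubfin
    have hcyz : commonNbrs G y z = b := by
      rcases hdich y z (fun h => hzy h.symm) with h | h
      · exact h
      · omega
    refine ⟨mem_dezaB_iff.2 ⟨hzy, ?_⟩, hzNy⟩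
    rw [commonNbrs_comm]
    exact hcyz
  -- conclude
  have hUsub : (dezaB G b x).biUnion (fun xi => G.neighborFinset xi \ G.neighborFinset x)
      ⊆ dezaB G b y := by
    intro w hw
    obtain ⟨xi, hxi, hwxi⟩ := Finset.mem_biUnion.1 hw
    exact (main xi hxi w hwxi).1
  have hUcard : (dezaB G b x).card
      = ((dezaB G b x).biUnion (fun xi => G.neighborFinset xi \ G.neighborFinset x)).card := by
    rw [Finset.card_biUnion (fun xi hxi xj hxj hne => by
      rw [Function.onFun, Finset.disjoint_left]
      intro w h1 h2
      exact hdisj xi hxi xj hxj hne w h1 h2)]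
    rw [Finset.sum_congr rfl hsdcard, Finset.sum_const, smul_eq_mul, mul_one]
  have hBy : dezaB G b y
      = (dezaB G b x).biUnion (fun xi => G.neighborFinset xi \ G.neighborFinset x) := by
    refine (Finset.eq_of_subset_of_card_le hUsub ?_).symm
    rw [← hUcard]
    exact le_of_eq (hβc y x)
  refine ⟨hBy, Finset.eq_empty_iff_forall_notMem.2 ?_⟩
  intro w hw
  obtain ⟨hw1, hw2⟩ := Finset.mem_inter.1 hw
  rw [hBy] at hw1
  obtain ⟨xi, hxi, hwxi⟩ := Finset.mem_biUnion.1 hw1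
  exact (main xi hxi w hwxi).2 hw2

private lemma deza_part2 {b a : ℕ}
    (hreg : ∀ v : V, (G.neighborFinset v).card = b + 1)
    (hdich : ∀ x y : V, x ≠ y → commonNbrs G x y = b ∨ commonNbrs G x y = a)
    (hab : a < b)
    (hβc : ∀ u v : V, (dezaB G b u).card = (dezaB G b v).card)
    (hβ1 : ∀ v : V, 1 ≤ (dezaB G b v).card)
    (x z : V) (hxA : dezaB G b x ∩ G.neighborFinset x = ∅)
    (hz : z ∉ insert x (G.neighborFinset x))
    (hzi : ∀ xi ∈ dezaB G b x, G.neighborFinset xi \ G.neighborFinset x = {z}) :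
    dezaB G b z =
      (dezaB G b x).biUnion (fun xi => G.neighborFinset x \ G.neighborFinset xi) ∧
    dezaB G b z ∩ G.neighborFinset z = ∅ := by
  classical
  have hselfN : ∀ v : V, v ∉ G.neighborFinset v := by
    intro v h
    rw [SimpleGraph.mem_neighborFinset] at h
    exact G.irrefl h
  have hzx : z ≠ x := fun h => hz (by rw [h]; exact Finset.mem_insert_self x _)
  have hzNx : z ∉ G.neighborFinset x := fun h => hz (Finset.mem_insert_of_mem h)
  have hnotnbr : ∀ u ∈ dezaB G b x, u ∉ G.neighborFinset x := by
    intro u hu hmem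
    have hmem2 : u ∈ dezaB G b x ∩ G.neighborFinset x := Finset.mem_inter.2 ⟨hu, hmem⟩
    rw [hxA] at hmem2
    exact absurd hmem2 (Finset.notMem_empty u)
  have hxBx : x ∉ dezaB G b x := fun h => (mem_dezaB_iff.1 h).1 rfl
  have hzBx : z ∉ dezaB G b x := by
    intro h
    have hmem : z ∈ G.neighborFinset z \ G.neighborFinset x := by
      rw [hzi z h]
      exact Finset.mem_singleton_self z
    exact hselfN z (Finset.mem_sdiff.1 hmem).1
  have hczx : commonNbrs G z x = a := by
    rcases hdich z x hzx with h | h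
    · exact absurd (mem_dezaB_iff.2 ⟨hzx, h⟩) hzBx
    · exact h
  have hzNxi : ∀ xi ∈ dezaB G b x, z ∈ G.neighborFinset xi := by
    intro xi hxi
    have hmem : z ∈ G.neighborFinset xi \ G.neighborFinset x := by
      rw [hzi xi hxi]
      exact Finset.mem_singleton_self z
    exact (Finset.mem_sdiff.1 hmem).1
  have hBxsubNz : ∀ xj ∈ dezaB G b x, xj ∈ G.neighborFinset z :=
    fun xj hxj => mem_nbr_comm.1 (hzNxi xj hxj)
  have hcxix : ∀ xi ∈ dezaB G b x, (G.neighborFinset xi ∩ G.neighborFinset x).card = b :=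
    fun xi hxi => (mem_dezaB_iff.1 hxi).2
  have hsdcard : ∀ xi ∈ dezaB G b x, (G.neighborFinset x \ G.neighborFinset xi).card = 1 := by
    intro xi hxi
    have h1 := Finset.card_inter_add_card_sdiff (G.neighborFinset x) (G.neighborFinset xi)
    rw [Finset.inter_comm, hcxix xi hxi, hreg x] at h1
    omega
  have hNxieq : ∀ xi ∈ dezaB G b x, ∀ w ∈ G.neighborFinset x \ G.neighborFinset xi,
      G.neighborFinset xi = insert z (G.neighborFinset x \ {w}) := by
    intro xi hxi w hw
    obtain ⟨w', hw'⟩ := Finset.card_eq_one.1 (hsdcard xi hxi)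
    have hww : w = w' := by
      rw [hw'] at hw
      exact Finset.mem_singleton.1 hw
    subst hww
    have hinter : G.neighborFinset xi ∩ G.neighborFinset x = G.neighborFinset x \ {w} := by
      rw [← hw', Finset.inter_comm, Finset.sdiff_sdiff_self_left]
    rw [← Finset.sdiff_union_inter (G.neighborFinset xi) (G.neighborFinset x), hzi xi hxi,
      hinter, Finset.insert_eq]
  have hdisj : ∀ xi ∈ dezaB G b x, ∀ xj ∈ dezaB G b x, xi ≠ xj →
      ∀ w, w ∈ G.neighborFinset x \ G.neighborFinset xi →
        w ∈ G.neighborFinset x \ G.neighborFinset xj → False := by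
    intro xi hxi xj hxj hne w hwi hwj
    have hEq : G.neighborFinset xi = G.neighborFinset xj := by
      rw [hNxieq xi hxi w hwi, hNxieq xj hxj w hwj]
    have hc : commonNbrs G xi xj = b + 1 := by
      rw [commonNbrs_def, hEq, Finset.inter_self, hreg xj]
    rcases hdich xi xj hne with h | h <;> omega
  have hBxi : ∀ xi ∈ dezaB G b x, dezaB G b xi = insert x ((dezaB G b x).erase xi) := by
    intro xi hxi
    have hxixx : xi ≠ x := (mem_dezaB_iff.1 hxi).1
    have hsubset : insert x ((dezaB G b x).erase xi) ⊆ dezaB G b xi := by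
      intro u hu
      rcases Finset.mem_insert.1 hu with rfl | hu
      · refine mem_dezaB_iff.2 ⟨hxixx.symm, ?_⟩
        rw [commonNbrs_comm]
        exact (mem_dezaB_iff.1 hxi).2
      · have hju := Finset.mem_of_mem_erase hu
        have hne : u ≠ xi := Finset.ne_of_mem_erase hu
        -- card of ((N x ∩ N xi) ∩ (N x ∩ N xj)) ≥ b - 1
        have hci : (G.neighborFinset x ∩ G.neighborFinset xi).card = b := by
          rw [Finset.inter_comm]; exact hcxix xi hxi
        have hcj : (G.neighborFinset x ∩ G.neighborFinset u).card = b := by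
          rw [Finset.inter_comm]; exact hcxix u hju
        have hcu := Finset.card_union_add_card_inter
          (G.neighborFinset x ∩ G.neighborFinset xi) (G.neighborFinset x ∩ G.neighborFinset u)
        have hUsub : (G.neighborFinset x ∩ G.neighborFinset xi)
            ∪ (G.neighborFinset x ∩ G.neighborFinset u) ⊆ G.neighborFinset x :=
          Finset.union_subset Finset.inter_subset_left Finset.inter_subset_left
        have hUle := Finset.card_le_card hUsub
        rw [hreg x] at hUle
        rw [hci, hcj] at hcu
        -- insert z of the inner intersection is inside N u ∩ N xi
        have hzi2 : z ∉ (G.neighborFinset x ∩ G.neighborFinset xi)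
            ∩ (G.neighborFinset x ∩ G.neighborFinset u) :=
          fun h => hzNx (Finset.mem_inter.1 (Finset.mem_inter.1 h).1).1
        have hsup : insert z ((G.neighborFinset x ∩ G.neighborFinset xi)
            ∩ (G.neighborFinset x ∩ G.neighborFinset u))
            ⊆ G.neighborFinset u ∩ G.neighborFinset xi := by
          intro t ht
          rcases Finset.mem_insert.1 ht with rfl | ht
          · exact Finset.mem_inter.2 ⟨hzNxi u hju, hzNxi xi hxi⟩
          · obtain ⟨ht1, ht2⟩ := Finset.mem_inter.1 ht
            exact Finset.mem_inter.2
              ⟨(Finset.mem_inter.1 ht2).2, (Finset.mem_inter.1 ht1).2⟩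
        have hge : b ≤ commonNbrs G u xi := by
          rw [commonNbrs_def]
          have h7 := Finset.card_le_card hsup
          rw [Finset.card_insert_of_notMem hzi2] at h7
          omega
        rcases hdich u xi hne with h | h
        · exact mem_dezaB_iff.2 ⟨hne, h⟩
        · omega
    have hcard2 : (dezaB G b xi).card ≤ (insert x ((dezaB G b x).erase xi)).card := by
      rw [Finset.card_insert_of_notMem (fun hc => hxBx (Finset.mem_of_mem_erase hc)),
        Finset.card_erase_of_mem hxi, hβc xi x]
      have h1 : 1 ≤ (dezaB G b x).card := Finset.card_pos.2 ⟨xi, hxi⟩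
      omega
    exact (Finset.eq_of_subset_of_card_le hsubset hcard2).symm
  -- main pointwise claim
  have main : ∀ xi ∈ dezaB G b x, ∀ w ∈ G.neighborFinset x \ G.neighborFinset xi,
      w ∈ dezaB G b z ∧ w ∉ G.neighborFinset z := by
    intro xi hxi w hw
    obtain ⟨hwNx, hwNxi⟩ := Finset.mem_sdiff.1 hw
    have hNxiw : G.neighborFinset xi = insert z (G.neighborFinset x \ {w}) :=
      hNxieq xi hxi w hw
    have hxiNx : xi ∉ G.neighborFinset x := hnotnbr xi hxi
    have hwx : w ≠ x := fun h => hselfN x (h ▸ hwNx)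
    have hwz : w ≠ z := fun h => hzNx (h ▸ hwNx)
    have hwxi : w ≠ xi := fun h => hxiNx (h ▸ hwNx)
    have hwBx : w ∉ dezaB G b x := fun h => hnotnbr w h hwNx
    have hcwx : commonNbrs G w x = a := by
      rcases hdich w x hwx with h | h
      · exact absurd (mem_dezaB_iff.2 ⟨hwx, h⟩) hwBx
      · exact h
    have hzxi : z ≠ xi := fun h => hselfN xi (h ▸ hzNxi xi hxi)
    have hzBxi : z ∉ dezaB G b xi := by
      rw [hBxi xi hxi]
      intro h
      rcases Finset.mem_insert.1 h with h | h
      · exact hzx h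
      · exact hzBx (Finset.mem_of_mem_erase h)
    have hczxi : commonNbrs G z xi = a := by
      rcases hdich z xi hzxi with h | h
      · exact absurd (mem_dezaB_iff.2 ⟨hzxi, h⟩) hzBxi
      · exact h
    have hzNw : z ∉ G.neighborFinset x \ {w} :=
      fun h => hzNx (Finset.mem_sdiff.1 h).1
    have decompXi : ∀ u : V, commonNbrs G u xi = a →
        (G.neighborFinset u ∩ (G.neighborFinset x \ {w})).card
          + (if z ∈ G.neighborFinset u then 1 else 0) = a := by
      intro u hu
      rw [commonNbrs_def, hNxiw, aux_card_inter_insert _ _ hzNw] at hu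
      exact hu
    have decompX : ∀ u : V, commonNbrs G u x = a →
        (G.neighborFinset u ∩ (G.neighborFinset x \ {w})).card
          + (if w ∈ G.neighborFinset u then 1 else 0) = a := by
      intro u hu
      have h2 : G.neighborFinset u ∩ (G.neighborFinset x \ {w})
          = (G.neighborFinset u ∩ G.neighborFinset x) \ {w} :=
        (Finset.inter_sdiff_assoc _ _ _).symm
      have h3 := aux_card_sdiff_singleton (G.neighborFinset u ∩ G.neighborFinset x) w
      have h4 : (w ∈ G.neighborFinset u ∩ G.neighborFinset x) ↔ w ∈ G.neighborFinset u := by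
        simp [Finset.mem_inter, hwNx]
      rw [commonNbrs_def] at hu
      rw [hu, if_congr h4 rfl rfl] at h3
      rw [h2, h3]
    -- M3 : w ∉ N z
    have hzNz : z ∉ G.neighborFinset z := hselfN z
    have hwNz : w ∉ G.neighborFinset z := by
      intro hmem
      have e2 := decompXi z hczxi
      have e1 := decompX z hczx
      rw [if_neg hzNz] at e2
      rw [if_pos hmem] at e1
      omega
    -- M4 : N z ∩ N x ⊆ N w
    have hM4 : ∀ t ∈ G.neighborFinset z ∩ G.neighborFinset x, t ∈ G.neighborFinset w := by
      intro t ht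
      obtain ⟨htNz, htNx⟩ := Finset.mem_inter.1 ht
      have htw : t ≠ w := fun h => hwNz (h ▸ htNz)
      have htNxw : t ∈ G.neighborFinset x \ {w} :=
        Finset.mem_sdiff.2 ⟨htNx, fun h => htw (Finset.mem_singleton.1 h)⟩
      have htx : t ≠ x := fun h => hselfN x (h ▸ htNx)
      have htBx : t ∉ dezaB G b x := fun h => hnotnbr t h htNx
      have hctx : commonNbrs G t x = a := by
        rcases hdich t x htx with h | h
        · exact absurd (mem_dezaB_iff.2 ⟨htx, h⟩) htBx
        · exact h
      have htNxi : t ∈ G.neighborFinset xi := by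
        rw [hNxiw]
        exact Finset.mem_insert_of_mem htNxw
      have htxi : t ≠ xi := fun h => hselfN xi (h ▸ htNxi)
      have htBxi : t ∉ dezaB G b xi := by
        rw [hBxi xi hxi]
        intro h
        rcases Finset.mem_insert.1 h with h | h
        · exact htx h
        · exact htBx (Finset.mem_of_mem_erase h)
      have hctxi : commonNbrs G t xi = a := by
        rcases hdich t xi htxi with h | h
        · exact absurd (mem_dezaB_iff.2 ⟨htxi, h⟩) htBxi
        · exact h
      have e1 := decompX t hctx
      have e2 := decompXi t hctxi
      rw [if_pos (mem_nbr_comm.1 htNz)] at e2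
      by_cases hwt : w ∈ G.neighborFinset t
      · exact mem_nbr_comm.1 hwt
      · rw [if_neg hwt] at e1
        omega
    -- M5 : card of N z ∩ (N x ∪ B x)
    have hdisjBN : Disjoint (G.neighborFinset z ∩ G.neighborFinset x) (dezaB G b x) := by
      rw [Finset.disjoint_left]
      intro t ht1 ht2
      exact hnotnbr t ht2 (Finset.mem_inter.1 ht1).2
    have hinterz : (G.neighborFinset z ∩ (G.neighborFinset x ∪ dezaB G b x)).card
        = a + (dezaB G b x).card := by
      rw [Finset.inter_union_distrib_left,
        Finset.inter_eq_right.2 (fun xj hxj => hBxsubNz xj hxj),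
        Finset.card_union_of_disjoint hdisjBN, ← commonNbrs_def, hczx]
    have hcardR : a + (dezaB G b x).card
        + (G.neighborFinset z \ (G.neighborFinset x ∪ dezaB G b x)).card = b + 1 := by
      have h6 := Finset.card_inter_add_card_sdiff (G.neighborFinset z)
        (G.neighborFinset x ∪ dezaB G b x)
      rw [hinterz, hreg z] at h6
      omega
    -- M6 : R ⊆ N w
    have hRsub : ∀ r ∈ G.neighborFinset z \ (G.neighborFinset x ∪ dezaB G b x),
        r ∈ G.neighborFinset w := by
      intro r hr
      obtain ⟨hrNz, hrNot⟩ := Finset.mem_sdiff.1 hr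
      have hrNx : r ∉ G.neighborFinset x := fun h => hrNot (Finset.mem_union_left _ h)
      have hrBx : r ∉ dezaB G b x := fun h => hrNot (Finset.mem_union_right _ h)
      have hxNz : x ∉ G.neighborFinset z := fun h => hzNx (mem_nbr_comm.1 h)
      have hrx : r ≠ x := fun h => hxNz (h ▸ hrNz)
      have hrxi : r ≠ xi := fun h => hrBx (h ▸ hxi)
      have hcrx : commonNbrs G r x = a := by
        rcases hdich r x hrx with h | h
        · exact absurd (mem_dezaB_iff.2 ⟨hrx, h⟩) hrBx
        · exact h
      have hrBxi : r ∉ dezaB G b xi := by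
        rw [hBxi xi hxi]
        intro h
        rcases Finset.mem_insert.1 h with h | h
        · exact hrx h
        · exact hrBx (Finset.mem_of_mem_erase h)
      have hcrxi : commonNbrs G r xi = a := by
        rcases hdich r xi hrxi with h | h
        · exact absurd (mem_dezaB_iff.2 ⟨hrxi, h⟩) hrBxi
        · exact h
      have e1 := decompX r hcrx
      have e2 := decompXi r hcrxi
      rw [if_pos (mem_nbr_comm.1 hrNz)] at e2
      by_cases hwr : w ∈ G.neighborFinset r
      · exact mem_nbr_comm.1 hwr
      · rw [if_neg hwr] at e1
        omega
    -- M7 : (B x).erase xi ⊆ N w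
    have hM7 : ∀ xj ∈ (dezaB G b x).erase xi, xj ∈ G.neighborFinset w := by
      intro xj hxj
      have hxj' := Finset.mem_of_mem_erase hxj
      have hji : xj ≠ xi := Finset.ne_of_mem_erase hxj
      have hwNxj : w ∈ G.neighborFinset xj := by
        by_contra hcon
        exact hdisj xj hxj' xi hxi hji w (Finset.mem_sdiff.2 ⟨hwNx, hcon⟩)
          (Finset.mem_sdiff.2 ⟨hwNx, hwNxi⟩)
      exact mem_nbr_comm.1 hwNxj
    -- assemble
    have hsubfin : ((G.neighborFinset z ∩ G.neighborFinset x) ∪ (dezaB G b x).erase xi)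
        ∪ (G.neighborFinset z \ (G.neighborFinset x ∪ dezaB G b x))
        ⊆ G.neighborFinset w ∩ G.neighborFinset z := by
      intro t ht
      rcases Finset.mem_union.1 ht with ht | ht
      · rcases Finset.mem_union.1 ht with ht | ht
        · exact Finset.mem_inter.2 ⟨hM4 t ht, (Finset.mem_inter.1 ht).1⟩
        · exact Finset.mem_inter.2 ⟨hM7 t ht, hBxsubNz t (Finset.mem_of_mem_erase ht)⟩
      · exact Finset.mem_inter.2 ⟨hRsub t ht, (Finset.mem_sdiff.1 ht).1⟩
    have hd1 : Disjoint (G.neighborFinset z ∩ G.neighborFinset x) ((dezaB G b x).erase xi) := by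
      rw [Finset.disjoint_left]
      intro t ht1 ht2
      exact hnotnbr t (Finset.mem_of_mem_erase ht2) (Finset.mem_inter.1 ht1).2
    have hd2 : Disjoint ((G.neighborFinset z ∩ G.neighborFinset x) ∪ (dezaB G b x).erase xi)
        (G.neighborFinset z \ (G.neighborFinset x ∪ dezaB G b x)) := by
      rw [Finset.disjoint_left]
      intro t ht1 ht2
      have ht2' := (Finset.mem_sdiff.1 ht2).2
      rcases Finset.mem_union.1 ht1 with ht | ht
      · exact ht2' (Finset.mem_union_left _ (Finset.mem_inter.1 ht).2)
      · exact ht2' (Finset.mem_union_right _ (Finset.mem_of_mem_erase ht))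
    have hge : b ≤ commonNbrs G w z := by
      rw [commonNbrs_def]
      have hcards : (((G.neighborFinset z ∩ G.neighborFinset x) ∪ (dezaB G b x).erase xi)
          ∪ (G.neighborFinset z \ (G.neighborFinset x ∪ dezaB G b x))).card = b := by
        rw [Finset.card_union_of_disjoint hd2, Finset.card_union_of_disjoint hd1,
          ← commonNbrs_def, hczx, Finset.card_erase_of_mem hxi]
        have hb1 := hβ1 x
        omega
      calc b = _ := hcards.symm
        _ ≤ _ := Finset.card_le_card hsubfin
    have hcwz : commonNbrs G w z = b := by
      rcases hdich w z hwz with h | h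
      · exact h
      · omega
    exact ⟨mem_dezaB_iff.2 ⟨hwz, hcwz⟩, hwNz⟩
  -- conclude
  have hUsub : (dezaB G b x).biUnion (fun xi => G.neighborFinset x \ G.neighborFinset xi)
      ⊆ dezaB G b z := by
    intro w hw
    obtain ⟨xi, hxi, hwxi⟩ := Finset.mem_biUnion.1 hw
    exact (main xi hxi w hwxi).1
  have hUcard : (dezaB G b x).card
      = ((dezaB G b x).biUnion (fun xi => G.neighborFinset x \ G.neighborFinset xi)).card := by
    rw [Finset.card_biUnion (fun xi hxi xj hxj hne => by
      rw [Function.onFun, Finset.disjoint_left]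
      intro w h1 h2
      exact hdisj xi hxi xj hxj hne w h1 h2)]
    rw [Finset.sum_congr rfl hsdcard, Finset.sum_const, smul_eq_mul, mul_one]
  have hBz : dezaB G b z
      = (dezaB G b x).biUnion (fun xi => G.neighborFinset x \ G.neighborFinset xi) := by
    refine (Finset.eq_of_subset_of_card_le hUsub ?_).symm
    rw [← hUcard]
    exact le_of_eq (hβc z x)
  refine ⟨hBz, Finset.eq_empty_iff_forall_notMem.2 ?_⟩
  intro w hw
  obtain ⟨hw1, hw2⟩ := Finset.mem_inter.1 hw
  rw [hBz] at hw1
  obtain ⟨xi, hxi, hwxi⟩ := Finset.mem_biUnion.1 hw1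
  exact (main xi hxi w hwxi).2 hw2

end Deza

theorem stmt11 {V : Type u} [Fintype V] [DecidableEq V] (G : SimpleGraph V)
    [DecidableRel G.Adj] (n k b a : ℕ)
    (hG : IsStrictlyDezaGraph G n k b a) (hk : k = b + 1)
    (hβ : ∀ v : V, 1 < (dezaB G b v).card) :
    (∀ x y : V, IsTypeA G b x → y ∈ G.neighborFinset x →
      (∀ xi ∈ dezaB G b x, G.neighborFinset x \ G.neighborFinset xi = {y}) →
      dezaB G b y =
        (dezaB G b x).biUnion (fun xi => G.neighborFinset xi \ G.neighborFinset x) ∧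
      IsTypeA G b y) ∧
    (∀ x z : V, IsTypeA G b x → z ∉ insert x (G.neighborFinset x) →
      (∀ xi ∈ dezaB G b x, G.neighborFinset xi \ G.neighborFinset x = {z}) →
      dezaB G b z =
        (dezaB G b x).biUnion (fun xi => G.neighborFinset x \ G.neighborFinset xi) ∧
      IsTypeA G b z) := by
  obtain ⟨⟨hne, hcard, hreg', hba, hdich⟩, hconn, hdiam, hex, hnsrg⟩ := hG
  have hreg : ∀ v : V, (G.neighborFinset v).card = b + 1 := by
    intro v
    have h := hreg' v
    rw [hk] at h
    exact h
  have hconv : ∀ v w : V, Fintype.card (G.commonNeighbors v w) = commonNbrs G v w := by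
    intro v w
    have h : (G.neighborFinset v ∩ G.neighborFinset w : Finset V)
        = (G.commonNeighbors v w).toFinset := by
      ext u
      simp [SimpleGraph.mem_neighborFinset, SimpleGraph.mem_commonNeighbors,
        Set.mem_toFinset]
    rw [commonNbrs_def, h, Set.toFinset_card]
  have hab : a < b := by
    rcases Nat.lt_or_ge a b with h | h
    · exact h
    · exfalso
      have hEq : a = b := le_antisymm hba h
      refine hnsrg ⟨b, b, ?_⟩
      refine ⟨hcard, by rw [hk] at hreg'; rw [hk]; exact hreg', ?_, ?_⟩
      · intro v w hadj
        rw [hconv]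
        rcases hdich v w hadj.ne with h' | h'
        · exact h'
        · rw [h', hEq]
      · intro v w hvw hnadj
        rw [hconv]
        rcases hdich v w hvw with h' | h'
        · exact h'
        · rw [h', hEq]
  have hβc : ∀ u v : V, (dezaB G b u).card = (dezaB G b v).card :=
    fun u v => card_dezaB_eq hreg hdich hab u v
  have hβ1 : ∀ v : V, 1 ≤ (dezaB G b v).card := fun v => le_of_lt (hβ v)
  constructor
  · intro x y hxA hy hyi
    exact deza_part1 hreg hdich hab hβc x y hxA hy hyi
  · intro x z hxA hz hzi
    exact deza_part2 hreg hdich hab hβc hβ1 x z hxA hz hzi
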